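/- Consider the shifted candidate solution: given states x_k(t-h), k = 0,…,K and inputs u_k(t-h), k = 0,…,K-1 satisfying x_k = A x_{k-1} + B u_{k-1}, ‖Θ_a u_{k-1}‖₂ ≤ a_max, ‖Θ_v v_k‖₂ ≤ v_max, and v_K(t-h) = 0, define x_k(t) = x_{k+1}(t-h) for k = 0,…,K-1, x_K(t) = x_K(t-h), u_k(t) = u_{k+1}(t-h) for k = 0,…,K-2, and u_{K-1}(t) = 0. Then the shifted sequences again satisfy the dynamics, the input bound, the velocity bound, and the terminal constraint v_K(t) = 0. -/
import Mathlib


open RealInnerProductSpace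

/-- Euclidean-norm view of a plain `Fin d → ℝ` vector. -/
noncomputable def euc {d : ℕ} (x : Fin d → ℝ) : EuclideanSpace ℝ (Fin d) :=
  (EuclideanSpace.equiv (Fin d) ℝ).symm x

theorem shifted_solution_feasible (d K : ℕ) (hK : 1 ≤ K) (h : ℝ) (hh : 0 < h)
    (A : Matrix (Fin d ⊕ Fin d) (Fin d ⊕ Fin d) ℝ)
    (B : Matrix (Fin d ⊕ Fin d) (Fin d) ℝ)
    (hA : A = Matrix.fromBlocks 1 (h • 1) 0 1)
    (hB : B = Sum.elim (fun i => ((h ^ 2 / 2) • (1 : Matrix (Fin d) (Fin d) ℝ)) i)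
                       (fun i => (h • (1 : Matrix (Fin d) (Fin d) ℝ)) i))
    (Θa Θv : Matrix (Fin d) (Fin d) ℝ)
    (hΘa : Θa.PosDef) (hΘv : Θv.PosDef)
    (amax vmax : ℝ) (hamax : 0 < amax) (hvmax : 0 < vmax)
    (p v u : ℕ → (Fin d → ℝ))
    (hdyn : ∀ k, 1 ≤ k → k ≤ K →
      A.mulVec (Sum.elim (p (k - 1)) (v (k - 1))) + B.mulVec (u (k - 1))
        = Sum.elim (p k) (v k))
    (hu : ∀ k, 1 ≤ k → k ≤ K → ‖euc (Θa.mulVec (u (k - 1)))‖ ≤ amax)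
    (hv : ∀ k, 1 ≤ k → k ≤ K → ‖euc (Θv.mulVec (v k))‖ ≤ vmax)
    (hterm : v K = 0)
    -- shifted sequences
    (p' v' u' : ℕ → (Fin d → ℝ))
    (hp' : ∀ k, p' k = p (min (k + 1) K))
    (hv' : ∀ k, v' k = v (min (k + 1) K))
    (hu' : ∀ k, u' k = if k + 1 ≤ K - 1 then u (k + 1) else 0) :
    (∀ k, 1 ≤ k → k ≤ K →
      A.mulVec (Sum.elim (p' (k - 1)) (v' (k - 1))) + B.mulVec (u' (k - 1))
        = Sum.elim (p' k) (v' k)) ∧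
    (∀ k, 1 ≤ k → k ≤ K → ‖euc (Θa.mulVec (u' (k - 1)))‖ ≤ amax) ∧
    (∀ k, 1 ≤ k → k ≤ K → ‖euc (Θv.mulVec (v' k))‖ ≤ vmax) ∧
    v' K = 0 := by
  simp only [hp', hv', hu']
  refine ⟨?_, ?_, ?_, ?_⟩
  · intro k hk1 hkK
    rcases lt_or_eq_of_le hkK with hlt | heq
    · have hmin1 : (k - 1 + 1) ⊓ K = k := by omega
      have hmin2 : (k + 1) ⊓ K = k + 1 := by omega
      have hif : k - 1 + 1 ≤ K - 1 := by omega
      have he : k - 1 + 1 = k := by omega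
      rw [hmin1, hmin2, if_pos hif, he]
      have := hdyn (k + 1) (by omega) (by omega)
      simpa using this
    · subst heq
      have hmin1 : (k - 1 + 1) ⊓ k = k := by omega
      have hmin2 : (k + 1) ⊓ k = k := by omega
      have hif : ¬ (k - 1 + 1 ≤ k - 1) := by omega
      rw [hmin1, hmin2, if_neg hif, hterm, hA]
      ext i
      cases i with
      | inl i =>
        simp [Matrix.mulVec, Matrix.fromBlocks, dotProduct, Fintype.sum_sum_type,
          Matrix.one_apply]
      | inr i =>
        simp [Matrix.mulVec, Matrix.fromBlocks, dotProduct, Fintype.sum_sum_type,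
          Matrix.one_apply]
  · intro k hk1 hkK
    rcases lt_or_eq_of_le hkK with hlt | heq
    · have hif : k - 1 + 1 ≤ K - 1 := by omega
      have he : k - 1 + 1 = k := by omega
      rw [if_pos hif, he]
      have := hu (k + 1) (by omega) (by omega)
      simpa using this
    · subst heq
      rw [if_neg (by omega : ¬ (k - 1 + 1 ≤ k - 1)), Matrix.mulVec_zero]
      have : ‖euc (d := d) 0‖ = 0 := by simp [euc]
      rw [this]; exact le_of_lt hamax
  · intro k hk1 hkK
    rcases lt_or_eq_of_le hkK with hlt | heq
    · have hmin : (k + 1) ⊓ K = k + 1 := by omega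
      rw [hmin]
      exact hv (k + 1) (by omega) (by omega)
    · subst heq
      have hmin : (k + 1) ⊓ k = k := by omega
      rw [hmin, hterm, Matrix.mulVec_zero]
      have : ‖euc (d := d) 0‖ = 0 := by simp [euc]
      rw [this]; exact le_of_lt hvmax
  · have hmin : (K + 1) ⊓ K = K := by omega
    rw [hmin, hterm]
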